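/- Let x : ℕ → ℚ be a sequence and let m ≥ 1. For every n ≥ 1, the m-th invert transform of x satisfies (𝒴^m x)(n) = Σ_{k=1}^{n} (k!/n!) · m^(k-1) · B_{n,k}(1!·x(1), 2!·x(2), 3!·x(3), …). -/

import Mathlib

/-- The invert transform of a sequence `x : ℕ → ℚ` (indexed from 1, `x 0` ignored):
`(𝒴x)(0) = 0` and `(𝒴x)(n) = x n + ∑_{j=1}^{n-1} x j * (𝒴x)(n-j)` for `n ≥ 1`. -/
def invert (x : ℕ → ℚ) : ℕ → ℚ
  | 0 => 0
  | n + 1 => x (n + 1) + ∑ j ∈ Finset.range n, x (j + 1) * invert x (n - j)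
  termination_by n => n
  decreasing_by omega

/-- The partial Bell polynomial `B_{n,k}(z₁, z₂, …)`, evaluated at a sequence of rationals
`z` (indexed from 1, `z 0` ignored): the sum over all finitely supported `α : ℕ → ℕ` with
`α 0 = 0`, `∑ i, α i = k` and `∑ i, i * α i = n` of `(n! / ∏ i, (α i)!) * ∏ i (z i / i!)^(α i)`. -/
def partialBell (n k : ℕ) (z : ℕ → ℚ) : ℚ :=
  ∑ α ∈ ((Finset.range (n + 1)).finsuppAntidiag k).filter
      (fun α => (∑ i ∈ Finset.range (n + 1), i * α i) = n ∧ α 0 = 0),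
    ((n.factorial : ℚ) / ∏ i ∈ Finset.range (n + 1), ((α i).factorial : ℚ)) *
      ∏ i ∈ Finset.range (n + 1), (z i / (i.factorial : ℚ)) ^ α i

section helpers
open PowerSeries Finset

noncomputable def Xs (x : ℕ → ℚ) : PowerSeries ℚ :=
  PowerSeries.mk fun i => if i = 0 then 0 else x i

lemma coeff_Xs (x : ℕ → ℚ) (i : ℕ) :
    PowerSeries.coeff i (Xs x) = if i = 0 then 0 else x i := coeff_mk _ _

lemma Xs_invert_eq (x : ℕ → ℚ) :
    Xs (invert x) = Xs x + Xs x * Xs (invert x) := by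
  ext n
  cases n with
  | zero =>
    simp [coeff_Xs, coeff_zero_eq_constantCoeff, map_mul]
    simp [Xs, constantCoeff_mk]
  | succ n =>
    rw [map_add, coeff_mul, coeff_Xs]
    rw [Finset.Nat.sum_antidiagonal_eq_sum_range_succ_mk]
    simp only [coeff_Xs]
    rw [Finset.sum_range_succ']
    simp only [if_pos rfl, zero_mul, add_zero]
    rw [Finset.sum_range_succ]
    have h1 : ∀ i ∈ Finset.range n,
        (if i + 1 = 0 then (0:ℚ) else x (i+1)) *
          (if n + 1 - (i+1) = 0 then 0 else invert x (n + 1 - (i+1)))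
        = x (i+1) * invert x (n - i) := by
      intro i hi
      rw [Finset.mem_range] at hi
      have : n + 1 - (i + 1) = n - i := by omega
      rw [this, if_neg (by omega), if_neg (by omega)]
    rw [Finset.sum_congr rfl h1]
    have : n + 1 - (n + 1) = 0 := by omega
    rw [this, if_pos rfl, mul_zero, add_zero, if_neg (by omega)]
    show invert x (n+1) = _
    rw [invert]
    simp [if_neg (Nat.succ_ne_zero n)]

lemma Xs_iter_eq (x : ℕ → ℚ) (m : ℕ) :
    Xs (invert^[m] x) = Xs x + (m : PowerSeries ℚ) * (Xs x * Xs (invert^[m] x)) := by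
  induction m with
  | zero => simp
  | succ m ih =>
    rw [Function.iterate_succ_apply']
    have h2 := Xs_invert_eq (invert^[m] x)
    push_cast
    linear_combination (1 - (m : PowerSeries ℚ) * Xs x) * h2 + (1 + Xs (invert (invert^[m] x))) * ih

lemma geom_unfold (X Y c : PowerSeries ℚ) (h : Y = X + c * (X * Y)) (N : ℕ) :
    Y = (∑ k ∈ Finset.Icc 1 N, c ^ (k - 1) * X ^ k) + c ^ N * X ^ N * Y := by
  induction N with
  | zero => simp
  | succ N ih =>
    rw [Finset.sum_Icc_succ_top (by omega : 1 ≤ N + 1)]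
    calc Y = (∑ k ∈ Finset.Icc 1 N, c ^ (k - 1) * X ^ k) + c ^ N * X ^ N * Y := ih
    _ = _ := by
        conv_lhs => rw [h]
        have : (N + 1) - 1 = N := by omega
        rw [this]
        ring

lemma constantCoeff_Xs (x : ℕ → ℚ) : constantCoeff (Xs x) = 0 := by
  simp [Xs, constantCoeff_mk]

lemma coeff_tail (f g h : PowerSeries ℚ) (hf : constantCoeff f = 0)
    (hg : constantCoeff g = 0) (n : ℕ) :
    PowerSeries.coeff n (h * f ^ n * g) = 0 := by
  have h1 : (X : PowerSeries ℚ) ^ n ∣ f ^ n :=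
    pow_dvd_pow_of_dvd (X_dvd_iff.mpr hf) n
  have h2 : (X : PowerSeries ℚ) ^ (n + 1) ∣ h * f ^ n * g := by
    rw [pow_succ]
    exact mul_dvd_mul (Dvd.dvd.mul_left h1 h) (X_dvd_iff.mpr hg)
  exact X_pow_dvd_iff.mp h2 n (by omega)

lemma coeff_Ym (x : ℕ → ℚ) (m n : ℕ) (hn : 1 ≤ n) :
    (invert^[m] x) n
      = ∑ k ∈ Finset.Icc 1 n, (m : ℚ) ^ (k - 1) * PowerSeries.coeff n (Xs x ^ k) := by
  have h := geom_unfold (Xs x) (Xs (invert^[m] x)) (m : PowerSeries ℚ) (Xs_iter_eq x m) n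
  have h0 : (invert^[m] x) n = PowerSeries.coeff n (Xs (invert^[m] x)) := by
    rw [coeff_Xs, if_neg (by omega)]
  rw [h0, h, map_add, map_sum]
  rw [coeff_tail (Xs x) (Xs (invert^[m] x)) ((m : PowerSeries ℚ) ^ n)
      (constantCoeff_Xs x) (constantCoeff_Xs _) n, add_zero]
  refine Finset.sum_congr rfl fun k _ => ?_
  have : ((m : PowerSeries ℚ)) ^ (k - 1) = C ((m : ℚ) ^ (k - 1)) := by
    rw [map_pow, map_natCast]
  rw [this, coeff_C_mul]

lemma range_succ_eq_insert (n : ℕ) : Finset.range (n + 1) = insert 0 (Finset.Icc 1 n) := by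
  ext i; simp [Nat.lt_succ_iff]; omega

lemma coeff_pow_congr (f g : PowerSeries ℚ) (n : ℕ)
    (h : ∀ j ≤ n, PowerSeries.coeff j f = PowerSeries.coeff j g) (k : ℕ) :
    ∀ j ≤ n, PowerSeries.coeff j (f ^ k) = PowerSeries.coeff j (g ^ k) := by
  induction k with
  | zero => simp
  | succ k ih =>
    intro j hj
    rw [pow_succ, pow_succ, coeff_mul, coeff_mul]
    refine Finset.sum_congr rfl fun p hp => ?_
    rw [Finset.HasAntidiagonal.mem_antidiagonal] at hp
    rw [ih p.1 (by omega), h p.2 (by omega)]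

noncomputable def Ts (x : ℕ → ℚ) (n : ℕ) : PowerSeries ℚ :=
  ∑ i ∈ Finset.Icc 1 n, PowerSeries.C (x i) * (PowerSeries.X : PowerSeries ℚ) ^ i

lemma coeff_Ts (x : ℕ → ℚ) (n j : ℕ) :
    PowerSeries.coeff j (Ts x n) = if j ∈ Finset.Icc 1 n then x j else 0 := by
  rw [Ts, map_sum]
  simp_rw [coeff_C_mul_X_pow]
  rw [Finset.sum_ite_eq (Finset.Icc 1 n) j x]

lemma coeff_Ts_pow (x : ℕ → ℚ) (n k : ℕ) (hn : 1 ≤ n) :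
    PowerSeries.coeff n ((Ts x n) ^ k)
      = ∑ α ∈ (Finset.piAntidiag (Finset.Icc 1 n) k).filter
            (fun α => (∑ i ∈ Finset.Icc 1 n, i * α i) = n),
          (Nat.multinomial (Finset.Icc 1 n) α : ℚ) * ∏ i ∈ Finset.Icc 1 n, x i ^ α i := by
  rw [Ts, Finset.sum_pow_eq_sum_piAntidiag, map_sum, Finset.sum_filter]
  refine Finset.sum_congr rfl fun α hα => ?_
  have hprod : ∏ i ∈ Finset.Icc 1 n, (PowerSeries.C (x i) * PowerSeries.X ^ i) ^ α i
      = PowerSeries.C (∏ i ∈ Finset.Icc 1 n, x i ^ α i)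
          * (PowerSeries.X : PowerSeries ℚ) ^ (∑ i ∈ Finset.Icc 1 n, i * α i) := by
    calc ∏ i ∈ Finset.Icc 1 n, (PowerSeries.C (x i) * PowerSeries.X ^ i) ^ α i
        = ∏ i ∈ Finset.Icc 1 n,
            (PowerSeries.C (x i ^ α i) * (PowerSeries.X : PowerSeries ℚ) ^ (i * α i)) := by
          refine Finset.prod_congr rfl fun i _ => ?_
          rw [mul_pow, map_pow, pow_mul]
      _ = (∏ i ∈ Finset.Icc 1 n, PowerSeries.C (x i ^ α i))
            * ∏ i ∈ Finset.Icc 1 n, (PowerSeries.X : PowerSeries ℚ) ^ (i * α i) :=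
          Finset.prod_mul_distrib
      _ = _ := by rw [map_prod, Finset.prod_pow_eq_pow_sum]
  rw [hprod]
  have : (Nat.multinomial (Finset.Icc 1 n) α : PowerSeries ℚ)
      = PowerSeries.C (Nat.multinomial (Finset.Icc 1 n) α : ℚ) := by
    rw [map_natCast]
  rw [this, coeff_C_mul, coeff_C_mul, coeff_X_pow]
  by_cases h : (∑ i ∈ Finset.Icc 1 n, i * α i) = n
  · rw [if_pos h, if_pos h.symm]; ring
  · rw [if_neg h, if_neg fun hh => h hh.symm]; ring

noncomputable def toFsp (n : ℕ) (α : ℕ → ℕ) : ℕ →₀ ℕ :=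
  Finsupp.onFinset (Finset.Icc 1 n) (fun i => if i ∈ Finset.Icc 1 n then α i else 0)
    (fun a ha => by
      by_cases h : a ∈ Finset.Icc 1 n
      · exact h
      · simp [h] at ha)


lemma key (x : ℕ → ℚ) (n k : ℕ) (hn : 1 ≤ n) :
    PowerSeries.coeff n ((Ts x n) ^ k)
      = (k.factorial : ℚ) / (n.factorial : ℚ)
          * partialBell n k (fun i => (i.factorial : ℚ) * x i) := by
  rw [coeff_Ts_pow x n k hn, partialBell, Finset.mul_sum]
  refine Finset.sum_nbij' (i := fun α => toFsp n α) (j := fun (β : ℕ →₀ ℕ) => ⇑β)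
    ?_ ?_ ?_ ?_ ?_
  · -- membership forward
    intro α hα
    rw [Finset.mem_filter, Finset.mem_piAntidiag] at hα
    obtain ⟨⟨hsum, hsupp⟩, hw⟩ := hα
    have hicc : Finset.Icc 1 n ⊆ Finset.range (n + 1) := by
      intro a ha; rw [Finset.mem_Icc] at ha; rw [Finset.mem_range]; omega
    have hco : ∀ i ∈ Finset.Icc 1 n, (toFsp n α) i = α i := by
      intro i hi
      simp only [toFsp, Finsupp.onFinset_apply]
      rw [if_pos hi]
    have h0 : (toFsp n α) 0 = 0 := by simp [toFsp]
    rw [Finset.mem_filter, Finset.mem_finsuppAntidiag]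
    refine ⟨⟨?_, ?_⟩, ?_, h0⟩
    · show ∑ i ∈ Finset.range (n + 1), (toFsp n α) i = k
      rw [range_succ_eq_insert, Finset.sum_insert (by simp), h0, zero_add]
      rw [Finset.sum_congr rfl hco, hsum]
    · refine (Finsupp.support_onFinset_subset).trans hicc
    · rw [range_succ_eq_insert, Finset.sum_insert (by simp), h0]
      rw [Finset.sum_congr rfl (fun i hi => by rw [hco i hi]), hw]
      ring
  · -- membership backward
    intro β hβ
    rw [Finset.mem_filter, Finset.mem_finsuppAntidiag] at hβ
    obtain ⟨⟨hsum, hsupp⟩, hw, h0⟩ := hβ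
    rw [Finset.mem_filter, Finset.mem_piAntidiag]
    have hmem : ∀ i, β i ≠ 0 → i ∈ Finset.Icc 1 n := by
      intro i hi
      have := hsupp (Finsupp.mem_support_iff.mpr hi)
      rw [Finset.mem_range] at this
      rw [Finset.mem_Icc]
      rcases Nat.eq_zero_or_pos i with h | h
      · exact absurd (h ▸ h0) hi
      · omega
    refine ⟨⟨?_, hmem⟩, ?_⟩
    · rw [range_succ_eq_insert, Finset.sum_insert (by simp), h0, zero_add] at hsum
      exact hsum
    · rw [range_succ_eq_insert, Finset.sum_insert (by simp), h0, mul_zero, zero_add] at hw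
      exact hw
  · -- left inverse
    intro α hα
    rw [Finset.mem_filter, Finset.mem_piAntidiag] at hα
    funext a
    by_cases h : a ∈ Finset.Icc 1 n
    · simp only [toFsp, Finsupp.onFinset_apply]; rw [if_pos h]
    · have : α a = 0 := by
        by_contra hc
        exact h (hα.1.2 a hc)
      simp only [toFsp, Finsupp.onFinset_apply]; rw [if_neg h, this]
  · -- right inverse
    intro β hβ
    rw [Finset.mem_filter, Finset.mem_finsuppAntidiag] at hβ
    obtain ⟨⟨hsum, hsupp⟩, hw, h0⟩ := hβ
    ext a
    by_cases h : a ∈ Finset.Icc 1 n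
    · simp only [toFsp, Finsupp.onFinset_apply]; rw [if_pos h]
    · have : β a = 0 := by
        by_contra hc
        have := hsupp (Finsupp.mem_support_iff.mpr hc)
        rw [Finset.mem_range] at this
        rw [Finset.mem_Icc] at h
        rcases Nat.eq_zero_or_pos a with h1 | h1
        · exact hc (h1 ▸ h0)
        · omega
      simp only [toFsp, Finsupp.onFinset_apply]; rw [if_neg h, this]
  · -- term equality
    intro α hα
    rw [Finset.mem_filter, Finset.mem_piAntidiag] at hα
    obtain ⟨⟨hsum, hsupp⟩, hw⟩ := hα
    have hco : ∀ i ∈ Finset.Icc 1 n, (toFsp n α) i = α i := by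
      intro i hi
      simp only [toFsp, Finsupp.onFinset_apply]
      rw [if_pos hi]
    have h0 : (toFsp n α) 0 = 0 := by simp [toFsp]
    have hfac : ∏ i ∈ Finset.range (n + 1), (((toFsp n α) i).factorial : ℚ)
        = ∏ i ∈ Finset.Icc 1 n, ((α i).factorial : ℚ) := by
      rw [range_succ_eq_insert, Finset.prod_insert (by simp), h0]
      simp only [Nat.factorial_zero, Nat.cast_one, one_mul]
      exact Finset.prod_congr rfl fun i hi => by rw [hco i hi]
    have hpow : ∏ i ∈ Finset.range (n + 1),
          (((i.factorial : ℚ) * x i) / (i.factorial : ℚ)) ^ (toFsp n α) i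
        = ∏ i ∈ Finset.Icc 1 n, x i ^ α i := by
      rw [range_succ_eq_insert, Finset.prod_insert (by simp), h0, pow_zero, one_mul]
      refine Finset.prod_congr rfl fun i hi => ?_
      rw [hco i hi, mul_div_cancel_left₀ _ (Nat.cast_ne_zero.mpr i.factorial_ne_zero)]
    rw [hfac, hpow]
    have hQne : (∏ i ∈ Finset.Icc 1 n, ((α i).factorial : ℚ)) ≠ 0 :=
      Finset.prod_ne_zero_iff.mpr fun i _ => Nat.cast_ne_zero.mpr (α i).factorial_ne_zero
    have hmult : (Nat.multinomial (Finset.Icc 1 n) α : ℚ)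
        = (k.factorial : ℚ) / ∏ i ∈ Finset.Icc 1 n, ((α i).factorial : ℚ) := by
      rw [eq_div_iff hQne]
      have hs := Nat.multinomial_spec (Finset.Icc 1 n) α
      rw [hsum] at hs
      rw [mul_comm]
      exact_mod_cast congrArg (Nat.cast : ℕ → ℚ) hs
    rw [hmult]
    have hn0 : (n.factorial : ℚ) ≠ 0 := Nat.cast_ne_zero.mpr n.factorial_ne_zero
    field_simp

end helpers

/-- For `m ≥ 1` and `n ≥ 1`,

`(𝒴^m x)(n) = ∑_{k=1}^n (k!/n!) · m^(k-1) · B_{n,k}(1!·x 1, 2!·x 2, …)`. -/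
theorem stmt_6 (x : ℕ → ℚ) (m : ℕ) (hm : 1 ≤ m) (n : ℕ) (hn : 1 ≤ n) :
    (invert^[m] x) n
      = ∑ k ∈ Finset.Icc 1 n,
          ((k.factorial : ℚ) / (n.factorial : ℚ)) * (m : ℚ) ^ (k - 1) *
            partialBell n k (fun i => (i.factorial : ℚ) * x i) := by
  rw [coeff_Ym x m n hn]
  refine Finset.sum_congr rfl fun k hk => ?_
  have hcoef : ∀ j ≤ n, PowerSeries.coeff j (Xs x) = PowerSeries.coeff j (Ts x n) := by
    intro j hj
    rw [coeff_Xs, coeff_Ts]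
    by_cases h0 : j = 0
    · subst h0; simp
    · rw [if_neg h0, if_pos (by rw [Finset.mem_Icc]; omega)]
  rw [coeff_pow_congr (Xs x) (Ts x n) n hcoef k n le_rfl, key x n k hn]
  ring
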